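/- Let d ≥ 1, let H be a d×d real symmetric matrix with 0 ⪯ H ⪯ βI for some β > 0, let δ ∈ (0, 1/2], and let η ∈ (0, 1/(8β)]. Then the spectral radius of the 3d×3d block matrix A = [[(1−δ)I, 0, −ηI], [I, 0, 0], [H, −H, 0]] satisfies ρ(A) < 1 − δ/2 (in particular ρ(A) < 1). -/

import Mathlib

open Matrix

noncomputable section

open scoped ComplexOrder

lemma psd_map {d : ℕ} {H : Matrix (Fin d) (Fin d) ℝ} (h : H.PosSemidef) :
    (H.map (Complex.ofReal ·)).PosSemidef := by
  obtain ⟨B, rfl⟩ : ∃ B : Matrix (Fin d) (Fin d) ℝ, H = Bᴴ * B := by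
    classical
    open scoped MatrixOrder in
    exact ⟨CFC.sqrt H, by
      have h0 : (0 : Matrix (Fin d) (Fin d) ℝ) ≤ H := Matrix.nonneg_iff_posSemidef.mpr h
      have hs : IsSelfAdjoint (CFC.sqrt H) := IsSelfAdjoint.of_nonneg (CFC.sqrt_nonneg H)
      rw [← Matrix.star_eq_conjTranspose, hs.star_eq, CFC.sqrt_mul_sqrt_self H h0]⟩
  have : (Bᴴ * B).map (Complex.ofReal ·) =
      (B.map (Complex.ofReal ·))ᴴ * (B.map (Complex.ofReal ·)) := by
    ext i j
    simp [Matrix.mul_apply, Matrix.map_apply, Matrix.conjTranspose_apply]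
  rw [this]
  exact Matrix.posSemidef_conjTranspose_mul_self _

lemma eig_of_spectrum {n : Type*} [Fintype n] [DecidableEq n] {M : Matrix n n ℂ} {lam : ℂ}
    (h : lam ∈ spectrum ℂ M) : ∃ v, v ≠ 0 ∧ M *ᵥ v = lam • v := by
  rw [spectrum.mem_iff] at h
  rw [Matrix.isUnit_iff_isUnit_det, isUnit_iff_ne_zero, not_not,
    ← Matrix.exists_mulVec_eq_zero_iff] at h
  obtain ⟨v, hv0, hv⟩ := h
  refine ⟨v, hv0, ?_⟩
  have h2 : (algebraMap ℂ (Matrix n n ℂ) lam) *ᵥ v = lam • v := by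
    ext i
    simp [Matrix.algebraMap_eq_diagonal, Matrix.mulVec_diagonal]
  rw [Matrix.sub_mulVec, sub_eq_zero, h2] at hv
  exact hv.symm

lemma cubic_root_bound {lam : ℂ} {δ ε : ℝ} (hδ0 : 0 < δ) (hδ1 : δ ≤ 1 / 2)
    (hε0 : 0 ≤ ε) (hε1 : ε ≤ 1 / 8)
    (heq : lam ^ 2 * ((1 - (δ:ℂ)) - lam) = (ε:ℂ) * (lam - 1)) :
    ‖lam‖ < 1 - δ / 2 := by
  by_contra hc
  push_neg at hc
  set a := ‖lam‖ with ha
  set t := ‖lam - ((1 - δ : ℝ) : ℂ)‖ with ht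
  set u := ‖lam - 1‖ with hu
  have f1 : a ^ 2 * t = ε * u := by
    have := congrArg (‖·‖) heq
    have htt : t = ‖(1:ℂ) - (δ:ℂ) - lam‖ := by
      rw [ht, ← norm_neg]; push_cast; ring_nf
    simpa [norm_mul, norm_pow, Complex.norm_real, Real.norm_eq_abs, abs_of_nonneg hε0, ← htt, hu, ha]
      using this
  have f2 : u ≤ t + δ := by
    have heq2 : lam - 1 = (lam - ((1 - δ : ℝ) : ℂ)) + ((-δ : ℝ) : ℂ) := by
      push_cast; ring
    calc u = ‖(lam - ((1 - δ : ℝ) : ℂ)) + ((-δ : ℝ) : ℂ)‖ := by rw [hu, heq2]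
    _ ≤ t + ‖((-δ : ℝ) : ℂ)‖ := norm_add_le _ _
    _ = t + δ := by rw [Complex.norm_real, Real.norm_eq_abs, abs_of_nonpos (by linarith)]; ring_nf
  have f3 : a - (1 - δ) ≤ t := by
    have hle : a ≤ t + (1 - δ) := by
      calc a = ‖(lam - ((1 - δ : ℝ) : ℂ)) + ((1 - δ : ℝ) : ℂ)‖ := by
            rw [ha]; ring_nf
      _ ≤ t + ‖((1 - δ : ℝ) : ℂ)‖ := norm_add_le _ _
      _ = t + (1 - δ) := by rw [Complex.norm_real, Real.norm_eq_abs, abs_of_nonneg (by linarith)]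
    linarith
  have ht0 : 0 ≤ t := norm_nonneg _
  have hu0 : 0 ≤ u := norm_nonneg _
  have htδ : δ / 2 ≤ t := by linarith
  have ha2 : (1 - δ / 2) ^ 2 ≤ a ^ 2 := by nlinarith
  have key : a ^ 2 * t ≤ (1 / 8) * (t + δ) := by
    calc a ^ 2 * t = ε * u := f1
    _ ≤ (1 / 8) * u := by nlinarith
    _ ≤ (1 / 8) * (t + δ) := by linarith
  have h9 : (9:ℝ)/16 ≤ (1 - δ/2) ^ 2 := by
    nlinarith [mul_nonneg (show (0:ℝ) ≤ 1/2 - δ by linarith) (show (0:ℝ) ≤ 7/2 - δ by linarith)]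
  have h916 : (9:ℝ)/16 * t ≤ a ^ 2 * t :=
    le_trans (mul_le_mul_of_nonneg_right h9 ht0) (mul_le_mul_of_nonneg_right ha2 ht0)
  linarith


/-- A `3d × 3d` matrix built from a `3 × 3` array of `d × d` blocks. -/
def blk3 {R : Type*} {d : ℕ} (B : Fin 3 → Fin 3 → Matrix (Fin d) (Fin d) R) :
    Matrix (Fin 3 × Fin d) (Fin 3 × Fin d) R :=
  Matrix.of fun p q => B p.1 q.1 p.2 q.2

/-- Lemma 3.3: the meta-optimization dynamics matrix
`A = [[(1−δ)I, 0, −ηI], [I, 0, 0], [H, −H, 0]]` has spectral radius `< 1 − δ/2 < 1`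
whenever `0 ⪯ H ⪯ βI`, `δ ∈ (0, 1/2]` and `0 < η ≤ 1/(8β)`. -/
theorem stmt0 (d : ℕ) (hd : 1 ≤ d) (H : Matrix (Fin d) (Fin d) ℝ) (β : ℝ) (hβ : 0 < β)
    (hH : H.PosSemidef) (hHβ : (β • (1 : Matrix (Fin d) (Fin d) ℝ) - H).PosSemidef)
    (δ η : ℝ) (hδ : δ ∈ Set.Ioc (0 : ℝ) (1 / 2)) (hη : η ∈ Set.Ioc (0 : ℝ) (1 / (8 * β)))
    (A : Matrix (Fin 3 × Fin d) (Fin 3 × Fin d) ℝ)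
    (hA : A = blk3 ![![(1 - δ) • 1, 0, (-η) • 1], ![1, 0, 0], ![H, -H, 0]]) :
    (∀ lam ∈ spectrum ℂ (A.map (Complex.ofReal ·)), ‖lam‖ < 1 - δ / 2) ∧
      (∀ lam ∈ spectrum ℂ (A.map (Complex.ofReal ·)), ‖lam‖ < 1) := by
  obtain ⟨hδ0, hδ1⟩ := hδ
  obtain ⟨hη0, hη1⟩ := hη
  have hhalf : (0:ℝ) < 1 - δ / 2 := by linarith
  have main : ∀ lam ∈ spectrum ℂ (A.map (Complex.ofReal ·)), ‖lam‖ < 1 - δ / 2 := by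
    intro lam hlam
    obtain ⟨v, hv0, hv⟩ := eig_of_spectrum hlam
    subst hA
    set x : Fin d → ℂ := fun k => v (0, k) with hxdef
    set y : Fin d → ℂ := fun k => v (1, k) with hydef
    set z : Fin d → ℂ := fun k => v (2, k) with hzdef
    set HC : Matrix (Fin d) (Fin d) ℂ := H.map (Complex.ofReal ·) with hHC
    have e0 : ∀ k, (1 - (δ:ℂ)) * x k - (η:ℂ) * z k = lam * x k := by
      intro k
      have h := congr_fun hv (0, k)
      simp only [Matrix.mulVec, dotProduct, Fintype.sum_prod_type, blk3, Matrix.map_apply,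
        Matrix.of_apply, Fin.sum_univ_three, Pi.smul_apply, smul_eq_mul] at h
      simp only [Matrix.cons_val', Matrix.cons_val_zero, Matrix.cons_val_one, Matrix.head_cons,
        Matrix.empty_val', Matrix.cons_val_fin_one, Matrix.head_fin_const, Matrix.cons_val_two,
        Matrix.tail_cons, Matrix.smul_apply, Matrix.one_apply, Matrix.zero_apply, smul_eq_mul,
        mul_ite, mul_one, mul_zero, ite_mul, zero_mul, Complex.ofReal_zero,
        apply_ite Complex.ofReal, Finset.sum_ite_eq, Finset.mem_univ, if_true,
        Finset.sum_const_zero, add_zero, zero_add] at h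
      push_cast at h ⊢
      linear_combination h
    have e1 : ∀ k, x k = lam * y k := by
      intro k
      have h := congr_fun hv (1, k)
      simp only [Matrix.mulVec, dotProduct, Fintype.sum_prod_type, blk3, Matrix.map_apply,
        Matrix.of_apply, Fin.sum_univ_three, Pi.smul_apply, smul_eq_mul] at h
      simp only [Matrix.cons_val', Matrix.cons_val_zero, Matrix.cons_val_one, Matrix.head_cons,
        Matrix.empty_val', Matrix.cons_val_fin_one, Matrix.head_fin_const, Matrix.cons_val_two,
        Matrix.tail_cons, Matrix.smul_apply, Matrix.one_apply, Matrix.zero_apply, smul_eq_mul,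
        mul_ite, mul_one, mul_zero, ite_mul, zero_mul, Complex.ofReal_zero,
        apply_ite Complex.ofReal, Finset.sum_ite_eq, Finset.mem_univ, if_true,
        Finset.sum_const_zero, add_zero, zero_add, Complex.ofReal_one, one_mul] at h
      linear_combination h
    have e2 : ∀ k, (HC *ᵥ x) k - (HC *ᵥ y) k = lam * z k := by
      intro k
      have h := congr_fun hv (2, k)
      simp only [Matrix.mulVec, dotProduct, Fintype.sum_prod_type, blk3, Matrix.map_apply,
        Matrix.of_apply, Fin.sum_univ_three, Pi.smul_apply, smul_eq_mul] at h
      simp only [Matrix.cons_val', Matrix.cons_val_zero, Matrix.cons_val_one, Matrix.head_cons,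
        Matrix.empty_val', Matrix.cons_val_fin_one, Matrix.head_fin_const, Matrix.cons_val_two,
        Matrix.tail_cons, Matrix.smul_apply, Matrix.one_apply, Matrix.zero_apply, smul_eq_mul,
        mul_ite, mul_one, mul_zero, ite_mul, zero_mul, Complex.ofReal_zero, Matrix.neg_apply,
        Complex.ofReal_neg, neg_mul, Finset.sum_neg_distrib,
        apply_ite Complex.ofReal, Finset.sum_ite_eq, Finset.mem_univ, if_true,
        Finset.sum_const_zero, add_zero, zero_add] at h
      simp only [hHC, Matrix.mulVec, dotProduct, Matrix.map_apply]
      linear_combination h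
    rcases eq_or_ne lam 0 with h0 | hl
    · simpa [h0] using hhalf
    have hy : y = lam⁻¹ • x := by
      funext k
      rw [Pi.smul_apply, smul_eq_mul, e1 k]
      field_simp
    have hx0 : x ≠ 0 := by
      intro hx
      apply hv0
      have hxk : ∀ k, x k = 0 := fun k => congrFun hx k
      have hyk : ∀ k, y k = 0 := by
        intro k
        have h := e1 k
        rw [hxk k] at h
        exact (mul_eq_zero.mp h.symm).resolve_left hl
      have hzk : ∀ k, z k = 0 := by
        intro k
        have h := e0 k
        rw [hxk k] at h
        have hz : (η:ℂ) * z k = 0 := by linear_combination -h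
        exact (mul_eq_zero.mp hz).resolve_left
          (Complex.ofReal_ne_zero.mpr hη0.ne')
      funext p
      obtain ⟨j, k⟩ := p
      fin_cases j
      · exact hxk k
      · exact hyk k
      · exact hzk k
    have hw : HC *ᵥ y = lam⁻¹ • (HC *ᵥ x) := by rw [hy, Matrix.mulVec_smul]
    have key : ∀ k, lam ^ 2 * ((1 - (δ:ℂ)) - lam) * x k
        = (η:ℂ) * (lam - 1) * (HC *ᵥ x) k := by
      intro k
      have h0' := e0 k
      have h2 := e2 k
      rw [hw, Pi.smul_apply, smul_eq_mul] at h2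
      have h2' : lam ^ 2 * z k = (lam - 1) * (HC *ᵥ x) k := by
        field_simp at h2
        linear_combination -h2
      linear_combination (η:ℂ) * h2' + lam ^ 2 * h0'
    have hvec : (lam ^ 2 * ((1 - (δ:ℂ)) - lam)) • x
        = ((η:ℂ) * (lam - 1)) • (HC *ᵥ x) := by
      funext k
      simpa [smul_eq_mul] using key k
    have hsc : lam ^ 2 * ((1 - (δ:ℂ)) - lam) * (star x ⬝ᵥ x)
        = (η:ℂ) * (lam - 1) * (star x ⬝ᵥ (HC *ᵥ x)) := by
      have := congrArg (fun w => star x ⬝ᵥ w) hvec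
      simpa [dotProduct_smul, smul_eq_mul] using this
    have hN : 0 ≤ star x ⬝ᵥ x := dotProduct_star_self_nonneg x
    have hNne : star x ⬝ᵥ x ≠ 0 := fun h => hx0 (dotProduct_star_self_eq_zero.mp h)
    have hS : 0 ≤ star x ⬝ᵥ (HC *ᵥ x) := (psd_map hH).dotProduct_mulVec_nonneg x
    have hmap : ((β • (1:Matrix (Fin d) (Fin d) ℝ) - H).map (Complex.ofReal ·))
        = (β:ℂ) • 1 - HC := by
      ext i j
      simp only [Matrix.map_apply, Matrix.sub_apply, Matrix.smul_apply, Matrix.one_apply,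
        smul_eq_mul, hHC]
      split_ifs <;> push_cast <;> ring
    have hβS : 0 ≤ (β:ℂ) * (star x ⬝ᵥ x) - star x ⬝ᵥ (HC *ᵥ x) := by
      have h := (psd_map hHβ).dotProduct_mulVec_nonneg x
      rw [hmap] at h
      calc (0:ℂ) ≤ star x ⬝ᵥ (((β:ℂ) • 1 - HC) *ᵥ x) := h
      _ = (β:ℂ) * (star x ⬝ᵥ x) - star x ⬝ᵥ (HC *ᵥ x) := by
          rw [Matrix.sub_mulVec, dotProduct_sub, Matrix.smul_mulVec,
            Matrix.one_mulVec, dotProduct_smul, smul_eq_mul]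
    set n : ℝ := (star x ⬝ᵥ x).re with hn
    set s : ℝ := (star x ⬝ᵥ (HC *ᵥ x)).re with hs
    have hNre : star x ⬝ᵥ x = (n:ℂ) := by
      obtain ⟨h1, h2⟩ := Complex.nonneg_iff.mp hN
      exact Complex.ext rfl h2.symm
    have hSre : star x ⬝ᵥ (HC *ᵥ x) = (s:ℂ) := by
      obtain ⟨h1, h2⟩ := Complex.nonneg_iff.mp hS
      exact Complex.ext rfl h2.symm
    have hn0 : 0 < n := by
      rcases lt_or_eq_of_le (Complex.nonneg_iff.mp hN).1 with h | h
      · exact h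
      · exact absurd (by rw [hNre, hn, ← h]; norm_num) hNne
    have hs0 : 0 ≤ s := (Complex.nonneg_iff.mp hS).1
    have hsβn : s ≤ β * n := by
      have := hβS
      rw [hNre, hSre] at this
      have h2 : ((β * n - s : ℝ) : ℂ) = (β:ℂ) * (n:ℂ) - (s:ℂ) := by push_cast; ring
      rw [← h2] at this
      have := (Complex.nonneg_iff.mp this).1
      simpa using this
    set ε : ℝ := η * s / n with hε
    have hε0 : 0 ≤ ε := by positivity
    have hε1 : ε ≤ 1 / 8 := by
      have h1 : η * s ≤ η * (β * n) := by nlinarith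
      have h2 : η * β ≤ 1 / 8 := by
        calc η * β ≤ (1 / (8 * β)) * β := mul_le_mul_of_nonneg_right hη1 hβ.le
        _ = 1 / 8 := by field_simp
      rw [hε, div_le_iff₀ hn0]
      nlinarith [mul_le_mul_of_nonneg_right h2 hn0.le, h1]
    have heq : lam ^ 2 * ((1 - (δ:ℂ)) - lam) = (ε:ℂ) * (lam - 1) := by
      rw [hNre, hSre] at hsc
      have hnC : (n:ℂ) ≠ 0 := by exact_mod_cast hn0.ne'
      have hεC : (ε:ℂ) = (η:ℂ) * (s:ℂ) / (n:ℂ) := by rw [hε]; push_cast; ring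
      rw [hεC]
      field_simp
      linear_combination hsc
    exact cubic_root_bound hδ0 hδ1 hε0 hε1 heq
  exact ⟨main, fun lam hl => lt_of_lt_of_le (main lam hl) (by linarith)⟩
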